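/- Let n ≥ 2 and let p_1 < p_2 be two integers in [1, 2n], each of which is either 1 or a prime, such that 2n + p_1 and 2n + p_2 are both prime and gcd((p_2 − p_1)/2, n) = 1. Then the prime sum graph G_{2n} contains a Hamilton cycle. -/

import Mathlib

/-- The prime sum graph of order `m`: vertices are `{1, ..., m}`, and two distinct
vertices are adjacent iff their sum is prime. -/
def primeSumGraph (m : ℕ) : SimpleGraph (Finset.Icc 1 m) where
  Adj i j := i ≠ j ∧ Nat.Prime (i.1 + j.1)
  symm := by
    constructor
    rintro i j ⟨h1, h2⟩
    exact ⟨h1.symm, by rwa [Nat.add_comm]⟩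
  loopless := by constructor; rintro i ⟨h, _⟩; exact h rfl

/-- Auxiliary: the `k`-th shift value. -/
def PSGm (N d k : ℕ) : ℕ := (k / 2 * (2 * d)) % N

/-- Auxiliary: the `k`-th vertex value (as a natural number, up to mod `N`). -/
def PSGe (N p₁ d k : ℕ) : ℕ :=
  if k % 2 = 0 then 1 + PSGm N d k else (p₁ - 1) + (N - PSGm N d k)

/-- Auxiliary: the `k`-th vertex of the Hamiltonian cycle. -/
def PSGv (N p₁ d : ℕ) (hN : 0 < N) (k : ℕ) : (Finset.Icc 1 N) :=
  ⟨(PSGe N p₁ d k - 1) % N + 1, by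
    rw [Finset.mem_Icc]
    have := Nat.mod_lt (PSGe N p₁ d k - 1) hN
    omega⟩

/-- Build a walk following a vertex sequence along which consecutive vertices are adjacent. -/
def PSGbuildWalk {V : Type*} {G : SimpleGraph V} (v : ℕ → V)
    (h : ∀ k, G.Adj (v k) (v (k + 1))) (s : ℕ) : (m : ℕ) → G.Walk (v s) (v (s + m))
  | 0 => SimpleGraph.Walk.nil
  | m + 1 => (PSGbuildWalk v h s m).concat (h (s + m))

lemma PSGsupport_buildWalk {V : Type*} {G : SimpleGraph V} (v : ℕ → V)
    (h : ∀ k, G.Adj (v k) (v (k + 1))) (s : ℕ) :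
    ∀ m, (PSGbuildWalk v h s m).support = (List.range (m + 1)).map (fun i => v (s + i))
  | 0 => by simp [PSGbuildWalk, List.range_succ]
  | m + 1 => by
    rw [PSGbuildWalk, SimpleGraph.Walk.support_concat, PSGsupport_buildWalk v h s m]
    conv_rhs => rw [List.range_succ]
    simp [← Nat.add_assoc]

lemma PSGedges_buildWalk {V : Type*} {G : SimpleGraph V} (v : ℕ → V)
    (h : ∀ k, G.Adj (v k) (v (k + 1))) (s : ℕ) :
    ∀ m, (PSGbuildWalk v h s m).edges = (List.range m).map (fun i => s(v (s + i), v (s + i + 1)))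
  | 0 => by simp [PSGbuildWalk]
  | m + 1 => by
    rw [PSGbuildWalk, SimpleGraph.Walk.edges_concat, PSGedges_buildWalk v h s m]
    conv_rhs => rw [List.range_succ]
    simp [← Nat.add_assoc]

theorem primeSumGraph_hamiltonian_of_two_primes (n p₁ p₂ : ℕ) (hn : 2 ≤ n)
    (hp₁_lb : 1 ≤ p₁) (hp₂_ub : p₂ ≤ 2 * n) (hlt : p₁ < p₂)
    (hp₁ : p₁ = 1 ∨ Nat.Prime p₁) (hp₂ : p₂ = 1 ∨ Nat.Prime p₂)
    (hq₁ : Nat.Prime (2 * n + p₁)) (hq₂ : Nat.Prime (2 * n + p₂))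
    (hgcd : Nat.gcd ((p₂ - p₁) / 2) n = 1) :
    ∃ a, ∃ w : (primeSumGraph (2 * n)).Walk a a, w.IsHamiltonianCycle := by
  set d := (p₂ - p₁) / 2 with hd
  have hN : 0 < 2 * n := by omega
  have hp₁odd : p₁ % 2 = 1 := by
    rcases Nat.even_or_odd p₁ with h | h
    · exfalso
      obtain ⟨t, ht⟩ := h
      have h2 : Even (2 * n + p₁) := ⟨n + t, by omega⟩
      have := (Nat.Prime.even_iff hq₁).1 h2
      omega
    · exact Nat.odd_iff.mp h
  have hp₂odd : p₂ % 2 = 1 := by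
    rcases Nat.even_or_odd p₂ with h | h
    · exfalso
      obtain ⟨t, ht⟩ := h
      have h2 : Even (2 * n + p₂) := ⟨n + t, by omega⟩
      have := (Nat.Prime.even_iff hq₂).1 h2
      omega
    · exact Nat.odd_iff.mp h
  have hdpos : 1 ≤ d := by omega
  have hp2eq : p₂ = p₁ + 2 * d := by omega
  have hp₂lt : p₂ < 2 * n := by omega
  have hp₁lt : p₁ < 2 * n := by omega
  -- facts about PSGm
  have hmlt : ∀ k, PSGm (2 * n) d k < 2 * n := fun k => Nat.mod_lt _ hN
  have hmeven : ∀ k, PSGm (2 * n) d k % 2 = 0 := by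
    intro k
    have h1 : k / 2 * (2 * d) = 2 * (k / 2 * d) := by ring
    rw [PSGm, h1, Nat.mul_mod_mul_left]
    omega
  have hepos : ∀ k, 1 ≤ PSGe (2 * n) p₁ d k := by
    intro k
    have := hmlt k
    rw [PSGe]
    split <;> omega
  have he0 : ∀ k, k % 2 = 0 → PSGe (2 * n) p₁ d k = 1 + PSGm (2 * n) d k := by
    intro k hk
    unfold PSGe
    rw [if_pos hk]
  have he1 : ∀ k, k % 2 = 1 →
      PSGe (2 * n) p₁ d k = (p₁ - 1) + (2 * n - PSGm (2 * n) d k) := by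
    intro k hk
    unfold PSGe
    rw [if_neg (by omega)]
  have h2mod : ∀ x y : ℕ, (2 * x ≡ 2 * y [MOD 2 * n]) ↔ (x ≡ y [MOD n]) := by
    intro x y
    constructor <;> intro h
    · have h' : 2 * x % (2 * n) = 2 * y % (2 * n) := h
      rw [Nat.mul_mod_mul_left, Nat.mul_mod_mul_left] at h'
      show x % n = y % n
      omega
    · show 2 * x % (2 * n) = 2 * y % (2 * n)
      rw [Nat.mul_mod_mul_left, Nat.mul_mod_mul_left]
      have h' : x % n = y % n := h
      omega
  have hpar : ∀ j k : ℕ, j ≡ k [MOD 2 * n] → j % 2 = k % 2 := by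
    intro j k h
    exact Nat.ModEq.of_dvd ⟨n, rfl⟩ h
  have hidx : ∀ j k : ℕ, (j ≡ k [MOD 2 * n]) ↔ (j % 2 = k % 2 ∧ (j / 2 ≡ k / 2 [MOD n])) := by
    intro j k
    constructor
    · intro h
      have hp := hpar j k h
      refine ⟨hp, (h2mod _ _).1 ?_⟩
      have h1 : 2 * (j / 2) + j % 2 ≡ 2 * (k / 2) + k % 2 [MOD 2 * n] := by
        have e1 : 2 * (j / 2) + j % 2 = j := Nat.div_add_mod j 2
        have e2 : 2 * (k / 2) + k % 2 = k := Nat.div_add_mod k 2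
        rw [e1, e2]; exact h
      rw [hp] at h1
      exact Nat.ModEq.add_right_cancel' _ h1
    · rintro ⟨hp, h2⟩
      have h1 := ((h2mod _ _).2 h2).add_right (k % 2)
      have e1 : 2 * (j / 2) + k % 2 = j := by omega
      have e2 : 2 * (k / 2) + k % 2 = k := by omega
      rwa [e1, e2] at h1
  have hmiff : ∀ j k : ℕ, (PSGm (2 * n) d j = PSGm (2 * n) d k) ↔ (j / 2 ≡ k / 2 [MOD n]) := by
    intro j k
    have e : ∀ x : ℕ, x * (2 * d) = 2 * (x * d) := fun x => by ring
    constructor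
    · intro h
      simp only [PSGm] at h
      have h1 : j / 2 * (2 * d) ≡ k / 2 * (2 * d) [MOD 2 * n] := h
      rw [e, e] at h1
      have h3 := (h2mod _ _).1 h1
      exact Nat.ModEq.cancel_right_of_coprime (by rwa [Nat.gcd_comm]) h3
    · intro h
      have h2 := (h2mod (j / 2 * d) (k / 2 * d)).2 (h.mul_right d)
      simp only [PSGm]
      rw [e, e]
      exact h2
  have hecut : ∀ j k : ℕ,
      (PSGe (2 * n) p₁ d j ≡ PSGe (2 * n) p₁ d k [MOD 2 * n]) ↔ (j ≡ k [MOD 2 * n]) := by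
    intro j k
    rw [hidx j k]
    rcases Nat.mod_two_eq_zero_or_one j with hj | hj <;>
      rcases Nat.mod_two_eq_zero_or_one k with hk | hk
    · rw [he0 j hj, he0 k hk, hj, hk]
      constructor
      · intro h
        have h1 : PSGm (2 * n) d j ≡ PSGm (2 * n) d k [MOD 2 * n] :=
          Nat.ModEq.add_left_cancel' 1 h
        have h2 : PSGm (2 * n) d j = PSGm (2 * n) d k := by
          have h1' : PSGm (2 * n) d j % (2 * n) = PSGm (2 * n) d k % (2 * n) := h1
          rw [Nat.mod_eq_of_lt (hmlt j), Nat.mod_eq_of_lt (hmlt k)] at h1'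
          exact h1'
        exact ⟨rfl, (hmiff j k).1 h2⟩
      · rintro ⟨-, h2⟩
        rw [(hmiff j k).2 h2]
    · rw [he0 j hj, he1 k hk, hj, hk]
      constructor
      · intro h
        exfalso
        have h2 : (1 + PSGm (2 * n) d j) % 2
            = ((p₁ - 1) + (2 * n - PSGm (2 * n) d k)) % 2 :=
          Nat.ModEq.of_dvd ⟨n, rfl⟩ h
        have := hmeven j; have := hmeven k; have := hmlt k
        omega
      · rintro ⟨hpq, -⟩
        exact absurd hpq (by omega)
    · rw [he1 j hj, he0 k hk, hj, hk]
      constructor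
      · intro h
        exfalso
        have h2 : ((p₁ - 1) + (2 * n - PSGm (2 * n) d j)) % 2
            = (1 + PSGm (2 * n) d k) % 2 :=
          Nat.ModEq.of_dvd ⟨n, rfl⟩ h
        have := hmeven j; have := hmeven k; have := hmlt j
        omega
      · rintro ⟨hpq, -⟩
        exact absurd hpq (by omega)
    · rw [he1 j hj, he1 k hk, hj, hk]
      constructor
      · intro h
        have h1 : (2 * n - PSGm (2 * n) d j) ≡ (2 * n - PSGm (2 * n) d k) [MOD 2 * n] :=
          Nat.ModEq.add_left_cancel' (p₁ - 1) h
        have h2 := h1.add_right (PSGm (2 * n) d j + PSGm (2 * n) d k)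
        have e1 : 2 * n - PSGm (2 * n) d j + (PSGm (2 * n) d j + PSGm (2 * n) d k)
            = 2 * n + PSGm (2 * n) d k := by have := hmlt j; omega
        have e2 : 2 * n - PSGm (2 * n) d k + (PSGm (2 * n) d j + PSGm (2 * n) d k)
            = 2 * n + PSGm (2 * n) d j := by have := hmlt k; omega
        rw [e1, e2] at h2
        have h3 : PSGm (2 * n) d k ≡ PSGm (2 * n) d j [MOD 2 * n] :=
          Nat.ModEq.add_left_cancel' (2 * n) h2
        have h4 : PSGm (2 * n) d k = PSGm (2 * n) d j := by
          have h3' : PSGm (2 * n) d k % (2 * n) = PSGm (2 * n) d j % (2 * n) := h3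
          rw [Nat.mod_eq_of_lt (hmlt k), Nat.mod_eq_of_lt (hmlt j)] at h3'
          exact h3'
        exact ⟨rfl, (hmiff j k).1 h4.symm⟩
      · rintro ⟨-, h2⟩
        rw [(hmiff j k).2 h2]
  -- the vertex function
  set v := PSGv (2 * n) p₁ d hN with hvdef
  have hvval : ∀ k, (v k).1 = (PSGe (2 * n) p₁ d k - 1) % (2 * n) + 1 := by
    intro k; rw [hvdef]; rfl
  have hv1 : ∀ k, 1 ≤ (v k).1 := by intro k; rw [hvval]; omega
  have hvle : ∀ k, (v k).1 ≤ 2 * n := by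
    intro k; rw [hvval]
    have := Nat.mod_lt (PSGe (2 * n) p₁ d k - 1) hN
    omega
  have hvcong : ∀ k, (v k).1 ≡ PSGe (2 * n) p₁ d k [MOD 2 * n] := by
    intro k
    rw [hvval]
    have h1 : (PSGe (2 * n) p₁ d k - 1) % (2 * n) ≡ PSGe (2 * n) p₁ d k - 1 [MOD 2 * n] :=
      Nat.mod_modEq _ _
    have h2 := h1.add_right 1
    have e : PSGe (2 * n) p₁ d k - 1 + 1 = PSGe (2 * n) p₁ d k := by have := hepos k; omega
    rwa [e] at h2
  have hsmall : ∀ x y : ℕ, 1 ≤ x → x ≤ 2 * n → 1 ≤ y → y ≤ 2 * n →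
      x ≡ y [MOD 2 * n] → x = y := by
    intro x y hx1 hx2 hy1 hy2 h
    have h' : x % (2 * n) = y % (2 * n) := h
    have hxm : x % (2 * n) = if x = 2 * n then 0 else x := by
      split
      · next hh => rw [hh]; exact Nat.mod_self _
      · next hh => exact Nat.mod_eq_of_lt (by omega)
    have hym : y % (2 * n) = if y = 2 * n then 0 else y := by
      split
      · next hh => rw [hh]; exact Nat.mod_self _
      · next hh => exact Nat.mod_eq_of_lt (by omega)
    rw [hxm, hym] at h'
    split_ifs at h' <;> omega
  have hveq : ∀ j k : ℕ, v j = v k ↔ (j ≡ k [MOD 2 * n]) := by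
    intro j k
    constructor
    · intro h
      have hval : (v j).1 = (v k).1 := congrArg Subtype.val h
      have h1 : PSGe (2 * n) p₁ d j ≡ PSGe (2 * n) p₁ d k [MOD 2 * n] :=
        (hvcong j).symm.trans (by rw [hval]; exact hvcong k)
      exact (hecut j k).1 h1
    · intro h
      have h1 := (hecut j k).2 h
      have h2 : (v j).1 ≡ (v k).1 [MOD 2 * n] := (hvcong j).trans (h1.trans (hvcong k).symm)
      exact Subtype.ext (hsmall _ _ (hv1 j) (hvle j) (hv1 k) (hvle k) h2)
  -- sum congruence
  have hsumcong : ∀ k, PSGe (2 * n) p₁ d k + PSGe (2 * n) p₁ d (k + 1)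
      ≡ (if k % 2 = 0 then p₁ else p₂) [MOD 2 * n] := by
    intro k
    rcases Nat.mod_two_eq_zero_or_one k with hk | hk
    · rw [if_pos hk]
      have hk1 : (k + 1) % 2 = 1 := by omega
      have hdiv : (k + 1) / 2 = k / 2 := by omega
      have hmm : PSGm (2 * n) d (k + 1) = PSGm (2 * n) d k := by
        simp only [PSGm, hdiv]
      rw [he0 k hk, he1 (k + 1) hk1, hmm]
      have := hmlt k
      have e1 : 1 + PSGm (2 * n) d k + ((p₁ - 1) + (2 * n - PSGm (2 * n) d k))
          = 2 * n + p₁ := by omega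
      rw [e1]
      exact Nat.add_mod_left _ _
    · rw [if_neg (by omega)]
      have hk1 : (k + 1) % 2 = 0 := by omega
      have hdiv : (k + 1) / 2 = k / 2 + 1 := by omega
      rw [he1 k hk, he0 (k + 1) hk1]
      have hm1 : PSGm (2 * n) d (k + 1) ≡ PSGm (2 * n) d k + 2 * d [MOD 2 * n] := by
        have e : (k + 1) / 2 * (2 * d) = k / 2 * (2 * d) + 2 * d := by rw [hdiv]; ring
        calc PSGm (2 * n) d (k + 1) = (k / 2 * (2 * d) + 2 * d) % (2 * n) := by
              simp only [PSGm, e]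
          _ ≡ k / 2 * (2 * d) + 2 * d [MOD 2 * n] := Nat.mod_modEq _ _
          _ ≡ PSGm (2 * n) d k + 2 * d [MOD 2 * n] :=
              Nat.ModEq.add_right _ (Nat.mod_modEq _ _).symm
      have e1 : (p₁ - 1) + (2 * n - PSGm (2 * n) d k) + (1 + PSGm (2 * n) d (k + 1))
          = ((p₁ - 1) + (2 * n - PSGm (2 * n) d k) + 1) + PSGm (2 * n) d (k + 1) := by omega
      have e2 : ((p₁ - 1) + (2 * n - PSGm (2 * n) d k) + 1) + (PSGm (2 * n) d k + 2 * d)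
          = 2 * n + p₂ := by have := hmlt k; omega
      calc (p₁ - 1) + (2 * n - PSGm (2 * n) d k) + (1 + PSGm (2 * n) d (k + 1))
          = ((p₁ - 1) + (2 * n - PSGm (2 * n) d k) + 1) + PSGm (2 * n) d (k + 1) := e1
        _ ≡ ((p₁ - 1) + (2 * n - PSGm (2 * n) d k) + 1) + (PSGm (2 * n) d k + 2 * d)
            [MOD 2 * n] := Nat.ModEq.add_left _ hm1
        _ = 2 * n + p₂ := e2
        _ ≡ p₂ [MOD 2 * n] := Nat.add_mod_left _ _
  -- final primality helper
  have hfinal : ∀ p S : ℕ, 2 ≤ S → S ≤ 2 * (2 * n) → (S ≡ p [MOD 2 * n]) → 1 ≤ p →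
      p < 2 * n → (p = 1 ∨ p.Prime) → Nat.Prime (2 * n + p) → S.Prime := by
    intro p S hS2 hSle h hp1 hplt hpor hq
    have h' : S % (2 * n) = p := by
      have h'' : S % (2 * n) = p % (2 * n) := h
      rw [Nat.mod_eq_of_lt hplt] at h''
      exact h''
    have hdm := Nat.div_add_mod S (2 * n)
    rw [h'] at hdm
    rcases Nat.lt_or_ge (S / (2 * n)) 2 with hq2 | hq2
    · have hc : S / (2 * n) = 0 ∨ S / (2 * n) = 1 := Nat.le_one_iff_eq_zero_or_eq_one.mp (by omega)
      rcases hc with h0 | h1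
      · rw [h0, Nat.mul_zero] at hdm
        have hSp : S = p := by omega
        rcases hpor with hh | hh
        · omega
        · rwa [hSp]
      · rw [h1, Nat.mul_one] at hdm
        have hSp : S = 2 * n + p := by omega
        rwa [hSp]
    · exfalso
      have hmul : 2 * n * 2 ≤ 2 * n * (S / (2 * n)) := Nat.mul_le_mul (le_refl (2 * n)) hq2
      set t := 2 * n * (S / (2 * n)) with ht
      omega
  -- adjacency
  have hadj : ∀ k, (primeSumGraph (2 * n)).Adj (v k) (v (k + 1)) := by
    intro k
    have hprime : Nat.Prime ((v k).1 + (v (k + 1)).1) := by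
      have hc : (v k).1 + (v (k + 1)).1 ≡ (if k % 2 = 0 then p₁ else p₂) [MOD 2 * n] :=
        ((hvcong k).add (hvcong (k + 1))).trans (hsumcong k)
      have hb1 := hv1 k; have hb2 := hv1 (k + 1)
      have hb3 := hvle k; have hb4 := hvle (k + 1)
      rcases Nat.mod_two_eq_zero_or_one k with hk | hk
      · rw [if_pos hk] at hc
        exact hfinal p₁ _ (by omega) (by omega) hc hp₁_lb hp₁lt hp₁ hq₁
      · rw [if_neg (by omega)] at hc
        exact hfinal p₂ _ (by omega) (by omega) hc (by omega) hp₂lt hp₂ hq₂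
    refine ⟨?_, hprime⟩
    intro he
    have h1 := (hveq k (k + 1)).1 he
    have h2 := hpar _ _ h1
    omega
  -- assemble the walk
  have hvN0 : v (1 + (2 * n - 1)) = v 0 := by
    apply (hveq _ _).2
    show (1 + (2 * n - 1)) % (2 * n) = 0 % (2 * n)
    have e : 1 + (2 * n - 1) = 2 * n := by omega
    rw [e, Nat.mod_self, Nat.zero_mod]
  set P := (PSGbuildWalk v hadj 1 (2 * n - 1)).copy rfl hvN0 with hP
  have hPsupp : P.support = (List.range (2 * n)).map (fun i => v (1 + i)) := by
    rw [hP, SimpleGraph.Walk.support_copy, PSGsupport_buildWalk]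
    have e : 2 * n - 1 + 1 = 2 * n := by omega
    rw [e]
  have hinj : ∀ i j : ℕ, i < 2 * n → j < 2 * n → v (1 + i) = v (1 + j) → i = j := by
    intro i j hi hj h
    have h1 := (hveq _ _).1 h
    have h2 : i ≡ j [MOD 2 * n] := Nat.ModEq.add_left_cancel' 1 h1
    have h2' : i % (2 * n) = j % (2 * n) := h2
    rw [Nat.mod_eq_of_lt hi, Nat.mod_eq_of_lt hj] at h2'
    exact h2'
  have hnodup : P.support.Nodup := by
    rw [hPsupp]
    refine List.Nodup.map_on ?_ List.nodup_range
    intro x hx y hy hxy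
    exact hinj x y (List.mem_range.1 hx) (List.mem_range.1 hy) hxy
  have hcard : Fintype.card (Finset.Icc 1 (2 * n)) = 2 * n := by
    rw [Fintype.card_coe, Nat.card_Icc]
    omega
  have hmem : ∀ u : (Finset.Icc 1 (2 * n)), u ∈ P.support := by
    have hbij : Function.Bijective (fun i : Fin (2 * n) => v (1 + i.1)) := by
      rw [Fintype.bijective_iff_injective_and_card]
      constructor
      · intro a b hab
        exact Fin.ext (hinj a.1 b.1 a.2 b.2 hab)
      · rw [hcard, Fintype.card_fin]
    intro u
    obtain ⟨i, hi⟩ := hbij.2 u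
    rw [hPsupp]
    exact List.mem_map.2 ⟨i.1, List.mem_range.2 i.2, hi⟩
  refine ⟨v 0, SimpleGraph.Walk.cons (hadj 0) P, ?_⟩
  rw [SimpleGraph.Walk.isHamiltonianCycle_iff_isCycle_and_support_count_tail_eq_one]
  constructor
  · rw [SimpleGraph.Walk.cons_isCycle_iff]
    refine ⟨SimpleGraph.Walk.IsPath.mk' hnodup, ?_⟩
    intro hmemE
    have hPedges : P.edges = (List.range (2 * n - 1)).map
        (fun i => s(v (1 + i), v (1 + i + 1))) := by
      rw [hP, SimpleGraph.Walk.edges_copy, PSGedges_buildWalk]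
    rw [hPedges] at hmemE
    obtain ⟨i, hi, he⟩ := List.mem_map.1 hmemE
    have hi' := List.mem_range.1 hi
    rw [Sym2.eq_iff] at he
    rcases he with ⟨h1, -⟩ | ⟨h1, h2⟩
    · have ha := (hveq _ _).1 h1
      have ha' : (1 + i) % (2 * n) = 0 % (2 * n) := ha
      rw [Nat.mod_eq_of_lt (by omega), Nat.zero_mod] at ha'
      omega
    · have ha := (hveq _ _).1 h1
      have ha' : (1 + i) % (2 * n) = 1 % (2 * n) := ha
      rw [Nat.mod_eq_of_lt (by omega), Nat.mod_eq_of_lt (by omega)] at ha'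
      have hb := (hveq _ _).1 h2
      have hb' : (1 + i + 1) % (2 * n) = 0 % (2 * n) := hb
      rw [Nat.mod_eq_of_lt (by omega), Nat.zero_mod] at hb'
      omega
  · intro u
    have htail : (SimpleGraph.Walk.cons (hadj 0) P).support.tail = P.support := by
      rw [SimpleGraph.Walk.support_cons]
      rfl
    rw [htail]
    exact @List.count_eq_one_of_mem _ instBEqOfDecidableEq _ _ _ hnodup (hmem u)
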